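/- Let M be continuous, positive, with M(u) → M₊ > 0 as u → +∞. If r is a positive solution of ṙ(u) = -(1/2)(1 - 2M(u)/r(u)) defined on (u₀, +∞) which is increasing and satisfies r(u) < 2M(u) on its whole domain, then r(u) → 2M₊ as u → +∞. -/

import Mathlib

open Set Filter

/-- an increasing positive solution of the null geodesic ODE on
`(u₀, +∞)` trapped below `2M(u)` tends to `2M₊` at `+∞`. -/
theorem stmt18 (M r : ℝ → ℝ) (u₀ Mplus : ℝ)
    (hMcont : Continuous M) (hMpos : ∀ u, 0 < M u)
    (hMlim : Tendsto M atTop (nhds Mplus)) (hMplus : 0 < Mplus)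
    (hpos : ∀ u ∈ Ioi u₀, 0 < r u)
    (hode : ∀ u ∈ Ioi u₀, HasDerivAt r (-(1/2) * (1 - 2 * M u / r u)) u)
    (hmono : MonotoneOn r (Ioi u₀))
    (htrap : ∀ u ∈ Ioi u₀, r u < 2 * M u) :
    Tendsto r atTop (nhds (2 * Mplus)) := by
  have ha : u₀ + 1 ∈ Ioi u₀ := by simp
  -- `M` is eventually bounded, hence `r` is bounded above on `Ioi u₀`.
  obtain ⟨U₀, hU₀⟩ := eventually_atTop.1
    (hMlim.eventually (eventually_le_nhds (lt_add_one Mplus)))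
  set V := max U₀ (u₀ + 1) with hV_def
  have hV : V ∈ Ioi u₀ := show u₀ < V from lt_of_lt_of_le (show u₀ < u₀ + 1 from ha) (le_max_right _ _)
  have hbound : ∀ u ∈ Ioi u₀, r u ≤ 2 * (Mplus + 1) := by
    intro u hu
    rcases le_total V u with h | h
    · have h1 : r u < 2 * M u := htrap u hu
      have h2 : M u ≤ Mplus + 1 := hU₀ u (le_trans (le_max_left _ _) h)
      linarith
    · have h1 : r u ≤ r V := hmono hu hV h
      have h2 : r V < 2 * M V := htrap V hV
      have h3 : M V ≤ Mplus + 1 := hU₀ V (le_max_left _ _)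
      linarith
  set S := r '' Ioi u₀ with hS_def
  have hne : S.Nonempty := ⟨r (u₀ + 1), ⟨u₀ + 1, ha, rfl⟩⟩
  have hbdd : BddAbove S := ⟨2 * (Mplus + 1), by
    rintro y ⟨u, hu, rfl⟩; exact hbound u hu⟩
  set l := sSup S with hl_def
  have hle : ∀ u ∈ Ioi u₀, r u ≤ l := fun u hu => le_csSup hbdd ⟨u, hu, rfl⟩
  have hl0 : 0 < l := lt_of_lt_of_le (hpos _ ha) (hle _ ha)
  -- `r` tends to `l` at `+∞`.
  have hrl : Tendsto r atTop (nhds l) := by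
    rw [Metric.tendsto_atTop]
    intro ε hε
    obtain ⟨y, ⟨x, hx, rfl⟩, hy⟩ := exists_lt_of_lt_csSup hne
      (show l - ε < l by linarith)
    refine ⟨max x (u₀ + 1), fun n hn => ?_⟩
    have hn1 : n ∈ Ioi u₀ :=
      show u₀ < n from lt_of_lt_of_le (show u₀ < u₀ + 1 from ha) (le_trans (le_max_right _ _) hn)
    have h1 : r x ≤ r n := hmono hx hn1 (le_trans (le_max_left _ _) hn)
    have h2 : r n ≤ l := hle n hn1
    rw [Real.dist_eq, abs_lt]
    constructor <;> linarith
  -- `l ≤ 2 Mplus`.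
  have hlle : l ≤ 2 * Mplus := by
    refine le_of_tendsto_of_tendsto hrl (hMlim.const_mul 2) ?_
    filter_upwards [eventually_gt_atTop u₀] with u hu
    exact (htrap u hu).le
  rcases eq_or_lt_of_le hlle with h | h
  · rwa [h] at hrl
  -- Otherwise the derivative would eventually be bounded below by `c/2 > 0`.
  exfalso
  set c := -(1/2) * (1 - 2 * Mplus / l) with hc_def
  have ht : 1 < 2 * Mplus / l := (one_lt_div hl0).2 h
  have hc : 0 < c := by rw [hc_def]; nlinarith
  have hderivlim : Tendsto (fun u => -(1/2) * (1 - 2 * M u / r u)) atTop (nhds c) := by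
    have h1 : Tendsto (fun u => 2 * M u / r u) atTop (nhds (2 * Mplus / l)) :=
      (hMlim.const_mul 2).div hrl hl0.ne'
    exact (tendsto_const_nhds.sub h1).const_mul _
  obtain ⟨U, hU⟩ := eventually_atTop.1
    ((hderivlim.eventually (eventually_ge_nhds (show c / 2 < c by linarith))).and
      (eventually_gt_atTop u₀))
  -- The auxiliary function `g u = r u - (c/2) u` is monotone on `[U, ∞)`.
  set g : ℝ → ℝ := fun u => r u - c / 2 * u with hg_def
  have hg : ∀ u ∈ Ici U, HasDerivAt g (-(1/2) * (1 - 2 * M u / r u) - c / 2) u := by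
    intro u hu
    exact (hode u (hU u hu).2).sub (by simpa using (hasDerivAt_id u).const_mul (c / 2))
  have hmonog : MonotoneOn g (Ici U) := by
    refine monotoneOn_of_hasDerivWithinAt_nonneg (convex_Ici U)
      (fun u hu => (hg u hu).continuousAt.continuousWithinAt)
      (fun u hu => ((hg u (interior_subset hu)).hasDerivWithinAt).mono interior_subset) ?_
    intro u hu
    rw [interior_Ici] at hu
    have := (hU u hu.le).1
    linarith
  -- Get a contradiction by going far enough to the right.
  set u := U + 2 * (l - r U + 1) / c with hu_def
  have hrUl : r U ≤ l := hle U (hU U le_rfl).2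
  have hUu : U ≤ u := by
    have : 0 ≤ 2 * (l - r U + 1) / c := div_nonneg (by linarith) hc.le
    rw [hu_def]; linarith
  have hkey : g U ≤ g u := hmonog self_mem_Ici hUu hUu
  have hcu : c / 2 * u = c / 2 * U + (l - r U + 1) := by
    rw [hu_def]; field_simp
  have hru : r u ≤ l := hle u (show u₀ < u from lt_of_lt_of_le (hU U le_rfl).2 hUu)
  simp only [hg_def] at hkey
  linarith
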